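/- Let γ be the circular order on ℚ, defined by γ(a,b,c) if and only if (a < b and b < c) or (b < c and c < a) or (c < a and a < b). Then (ℚ, γ) has a local SWIR: there exists a ternary relation on the nonempty finite subsets of ℚ satisfying (Inv), (Ex), (Sta) and (Mon) with respect to automorphisms of (ℚ, γ). -/

import Mathlib

namespace Stmt13

open scoped Classical

variable {M : Type*}

/-- The permutation `g` fixes the finite set `A` pointwise. -/
def Fixes (g : Equiv.Perm M) (A : Finset M) : Prop := ∀ a ∈ A, g a = a

/-- The image `g(A)` of a finite set under a permutation. -/
def pimg (g : Equiv.Perm M) (A : Finset M) : Finset M := A.map g.toEmbedding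

/-- `B ≡_A B'` : some automorphism (with respect to the predicate `Auto`) fixes `A`
pointwise and maps `B` onto `B'`. -/
def EquivOver (Auto : Equiv.Perm M → Prop) (A B B' : Finset M) : Prop :=
  ∃ g : Equiv.Perm M, Auto g ∧ Fixes g A ∧ pimg g B = B'

/-- A local SWIR: a ternary relation `Ind` on the nonempty finite subsets of `M`
(`Ind A B C` is read `B ⫫_A C`) satisfying (Inv), (Ex), (Sta) and (Mon) with respect to
the automorphisms of `M` (the permutations satisfying `Auto`). -/
structure IsLocalSWIR (Auto : Equiv.Perm M → Prop)
    (Ind : Finset M → Finset M → Finset M → Prop) : Prop where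
  inv : ∀ A B C : Finset M, A.Nonempty → B.Nonempty → C.Nonempty →
    ∀ g : Equiv.Perm M, Auto g → Ind A B C → Ind (pimg g A) (pimg g B) (pimg g C)
  exLeft : ∀ A B C : Finset M, A.Nonempty → B.Nonempty → C.Nonempty →
    ∃ B' : Finset M, EquivOver Auto A B B' ∧ Ind A B' C
  exRight : ∀ A B C : Finset M, A.Nonempty → B.Nonempty → C.Nonempty →
    ∃ C' : Finset M, EquivOver Auto A C C' ∧ Ind A B C'
  staLeft : ∀ A B B' C : Finset M, A.Nonempty → B.Nonempty → B'.Nonempty → C.Nonempty →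
    Ind A B C → Ind A B' C →
    ∀ g : Equiv.Perm M, Auto g → Fixes g A → pimg g B = B' →
      ∃ h : Equiv.Perm M, Auto h ∧ Fixes h (A ∪ C) ∧ ∀ b ∈ B, h b = g b
  staRight : ∀ A B C C' : Finset M, A.Nonempty → B.Nonempty → C.Nonempty → C'.Nonempty →
    Ind A B C → Ind A B C' →
    ∀ g : Equiv.Perm M, Auto g → Fixes g A → pimg g C = C' →
      ∃ h : Equiv.Perm M, Auto h ∧ Fixes h (A ∪ B) ∧ ∀ c ∈ C, h c = g c
  monLeft : ∀ A B C D : Finset M, A.Nonempty → B.Nonempty → C.Nonempty → D.Nonempty →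
    Ind A (B ∪ D) C → Ind A B C ∧ Ind (A ∪ B) D C
  monRight : ∀ A B C D : Finset M, A.Nonempty → B.Nonempty → C.Nonempty → D.Nonempty →
    Ind A B (C ∪ D) → Ind A B C ∧ Ind (A ∪ C) B D

/-- The circular order on `ℚ`. -/
def gamma (a b c : ℚ) : Prop := (a < b ∧ b < c) ∨ (b < c ∧ c < a) ∨ (c < a ∧ a < b)

/-- Automorphisms of `(ℚ, γ)`. -/
def AutoGamma (g : Equiv.Perm ℚ) : Prop :=
  ∀ a b c : ℚ, gamma (g a) (g b) (g c) ↔ gamma a b c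

/-- the circular order `(ℚ, γ)` has a local SWIR. -/
-- ===== auxiliary development =====
lemma gamma_cyc {x y z : ℚ} : gamma x y z ↔ gamma y z x := by unfold gamma; tauto

lemma gamma_ne {x y z : ℚ} (h : gamma x y z) : x ≠ y ∧ y ≠ z ∧ z ≠ x := by
  unfold gamma at h
  refine ⟨?_, ?_, ?_⟩ <;> rintro rfl <;> rcases h with ⟨h1,h2⟩|⟨h1,h2⟩|⟨h1,h2⟩ <;> linarith

lemma gamma_pairwise {x y z x' y' z' : ℚ}
    (h1 : x < y ↔ x' < y') (h3 : y < z ↔ y' < z') (h6 : z < x ↔ z' < x') :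
    gamma x y z ↔ gamma x' y' z' := by unfold gamma; rw [h1, h3, h6]

/-- evaluation when `z` is the max -/
lemma gamma_eval_max {x y z : ℚ} (hx : x < z) (hy : y < z) : gamma x y z ↔ x < y := by
  unfold gamma
  constructor
  · rintro (⟨h1,h2⟩|⟨h1,h2⟩|⟨h1,h2⟩) <;> linarith
  · intro h; exact Or.inl ⟨h, hy⟩

/-- evaluation when `z` is the min -/
lemma gamma_eval_min {x y z : ℚ} (hx : z < x) (hy : z < y) : gamma x y z ↔ x < y := by
  unfold gamma
  constructor
  · rintro (⟨h1,h2⟩|⟨h1,h2⟩|⟨h1,h2⟩) <;> linarith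
  · intro h; exact Or.inr (Or.inr ⟨hx, h⟩)

/-- the cut-order embedding at base point `a₀` -/
noncomputable def mq (a₀ x : ℚ) : ℚ := (a₀ - x)⁻¹

lemma mq_pos {a₀ x : ℚ} (h : x < a₀) : 0 < mq a₀ x :=
  inv_pos.mpr (by linarith)

lemma mq_neg {a₀ x : ℚ} (h : a₀ < x) : mq a₀ x < 0 :=
  inv_lt_zero.mpr (by linarith)

lemma mq_inj {a₀ x y : ℚ} (hx : x ≠ a₀) (hy : y ≠ a₀) (h : mq a₀ x = mq a₀ y) : x = y := by
  unfold mq at h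
  have := inv_injective h
  linarith [this]

lemma mq_lt_mq_left {a₀ x y : ℚ} (hx : x < a₀) (hy : y < a₀) :
    (mq a₀ x < mq a₀ y ↔ x < y) := by
  unfold mq
  rw [inv_lt_inv₀ (by linarith) (by linarith)]
  constructor <;> intro <;> linarith

lemma mq_lt_mq_right {a₀ x y : ℚ} (hx : a₀ < x) (hy : a₀ < y) :
    (mq a₀ x < mq a₀ y ↔ x < y) := by
  unfold mq
  rw [inv_lt_inv_of_neg (by linarith) (by linarith)]
  constructor <;> intro <;> linarith

/-- the key lemma relating `gamma` at base `a₀` to the order of `mq`. -/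
lemma mq_lt_iff {a₀ x y : ℚ} (hx : x ≠ a₀) (hy : y ≠ a₀) :
    mq a₀ x < mq a₀ y ↔ gamma a₀ x y := by
  rcases lt_or_gt_of_ne hx with h1 | h1 <;> rcases lt_or_gt_of_ne hy with h2 | h2
  · rw [mq_lt_mq_left h1 h2]
    unfold gamma
    constructor
    · intro h; exact Or.inr (Or.inl ⟨h, h2⟩)
    · rintro (⟨g1,g2⟩|⟨g1,g2⟩|⟨g1,g2⟩) <;> linarith
  · constructor
    · intro h
      exfalso
      have := mq_pos (a₀ := a₀) h1
      have := mq_neg (a₀ := a₀) h2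
      linarith
    · rintro (⟨g1,g2⟩|⟨g1,g2⟩|⟨g1,g2⟩) <;> linarith
  · constructor
    · intro _
      exact Or.inr (Or.inr ⟨h2, h1⟩)
    · intro _
      have := mq_neg (a₀ := a₀) h1
      have := mq_pos (a₀ := a₀) h2
      linarith
  · rw [mq_lt_mq_right h1 h2]
    unfold gamma
    constructor
    · intro h; exact Or.inl ⟨h1, h⟩
    · rintro (⟨g1,g2⟩|⟨g1,g2⟩|⟨g1,g2⟩) <;> linarith

/-- the cut lemma: `gamma` on points distinct from `a₀` is computed by `mq`-images. -/
lemma gamma_cut {a₀ x y z : ℚ} (hx : x ≠ a₀) (hy : y ≠ a₀) (hz : z ≠ a₀) :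
    gamma x y z ↔ gamma (mq a₀ x) (mq a₀ y) (mq a₀ z) := by
  rcases eq_or_ne x y with rfl | hxy
  · constructor <;> intro h <;> exact absurd rfl (gamma_ne h).1
  rcases eq_or_ne y z with rfl | hyz
  · constructor <;> intro h <;> exact absurd rfl (gamma_ne h).2.1
  rcases eq_or_ne z x with rfl | hzx
  · constructor <;> intro h <;> exact absurd rfl (gamma_ne h).2.2
  rcases lt_or_gt_of_ne hx with px | px <;> rcases lt_or_gt_of_ne hy with py | py <;>
    rcases lt_or_gt_of_ne hz with pz | pz
  -- all on the same side: all orders agree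
  · exact gamma_pairwise (mq_lt_mq_left px py).symm (mq_lt_mq_left py pz).symm
      (mq_lt_mq_left pz px).symm
  -- x,y < a₀ < z : z is max among (x,y,z), mq z is min
  · rw [gamma_eval_max (show x < z by linarith) (show y < z by linarith),
      gamma_eval_min ((mq_neg pz).trans (mq_pos px)) ((mq_neg pz).trans (mq_pos py)),
      mq_lt_mq_left px py]
  -- x < a₀ < y, z < a₀ : y is max, mq y is min ; use cyclic rotation
  · rw [show (gamma x y z ↔ gamma (mq a₀ x) (mq a₀ y) (mq a₀ z)) ↔
        (gamma z x y ↔ gamma (mq a₀ z) (mq a₀ x) (mq a₀ y)) from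
      iff_congr (gamma_cyc.trans gamma_cyc) (gamma_cyc.trans gamma_cyc)]
    rw [gamma_eval_max (show z < y by linarith) (show x < y by linarith),
      gamma_eval_min ((mq_neg py).trans (mq_pos pz)) ((mq_neg py).trans (mq_pos px)),
      mq_lt_mq_left pz px]
  -- x < a₀ < y, z > a₀ : x is min, mq x is max; rotate so x is last
  · rw [show (gamma x y z ↔ gamma (mq a₀ x) (mq a₀ y) (mq a₀ z)) ↔
        (gamma y z x ↔ gamma (mq a₀ y) (mq a₀ z) (mq a₀ x)) from
      iff_congr gamma_cyc gamma_cyc]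
    rw [gamma_eval_min (show x < y by linarith) (show x < z by linarith),
      gamma_eval_max ((mq_neg py).trans (mq_pos px)) ((mq_neg pz).trans (mq_pos px)),
      mq_lt_mq_right py pz]
  -- x > a₀ > y,z : x is the max; rotate so x is last
  · rw [show (gamma x y z ↔ gamma (mq a₀ x) (mq a₀ y) (mq a₀ z)) ↔
        (gamma y z x ↔ gamma (mq a₀ y) (mq a₀ z) (mq a₀ x)) from
      iff_congr gamma_cyc gamma_cyc]
    rw [gamma_eval_max (show y < x by linarith) (show z < x by linarith),
      gamma_eval_min ((mq_neg px).trans (mq_pos py)) ((mq_neg px).trans (mq_pos pz)),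
      mq_lt_mq_left py pz]
  -- x,z > a₀ > y : y is the min; rotate so y is last
  · rw [show (gamma x y z ↔ gamma (mq a₀ x) (mq a₀ y) (mq a₀ z)) ↔
        (gamma z x y ↔ gamma (mq a₀ z) (mq a₀ x) (mq a₀ y)) from
      iff_congr (gamma_cyc.trans gamma_cyc) (gamma_cyc.trans gamma_cyc)]
    rw [gamma_eval_min (show y < z by linarith) (show y < x by linarith),
      gamma_eval_max ((mq_neg pz).trans (mq_pos py)) ((mq_neg px).trans (mq_pos py)),
      mq_lt_mq_right pz px]
  -- x,y > a₀ > z : z is the min, z is last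
  · rw [gamma_eval_min (show z < x by linarith) (show z < y by linarith),
      gamma_eval_max ((mq_neg px).trans (mq_pos pz)) ((mq_neg py).trans (mq_pos pz)),
      mq_lt_mq_right px py]
  · exact gamma_pairwise (mq_lt_mq_right px py).symm (mq_lt_mq_right py pz).symm
      (mq_lt_mq_right pz px).symm

/-- the cut order at `a₀` : the rationals other than `a₀`, ordered by `mq`. -/
structure Xt (a₀ : ℚ) : Type where
  val : ℚ
  prop : val ≠ a₀

lemma Xt.ext' {a₀ : ℚ} {x y : Xt a₀} (h : x.val = y.val) : x = y := by
  cases x; cases y; cases h; rfl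

namespace Xt

variable {a₀ : ℚ}

noncomputable instance : LinearOrder (Xt a₀) :=
  LinearOrder.lift' (fun x : Xt a₀ => mq a₀ x.1) (fun x y h => Xt.ext' (mq_inj x.2 y.2 h))

lemma lt_iff {x y : Xt a₀} : x < y ↔ mq a₀ x.1 < mq a₀ y.1 := Iff.rfl

lemma lt_iff_gamma {x y : Xt a₀} : x < y ↔ gamma a₀ x.1 y.1 :=
  lt_iff.trans (mq_lt_iff x.2 y.2)

lemma mq_surj {q : ℚ} (hq : q ≠ 0) : ∃ z : Xt a₀, mq a₀ z.1 = q := by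
  refine ⟨⟨a₀ - q⁻¹, ?_⟩, ?_⟩
  · intro h
    apply hq
    have : q⁻¹ = 0 := by linarith [sub_eq_self.mp h]
    simpa using congrArg (·⁻¹) this
  · show (a₀ - (a₀ - q⁻¹))⁻¹ = q
    rw [sub_sub_cancel, inv_inv]

instance : Nonempty (Xt a₀) := ⟨⟨a₀ + 1, by intro h; linarith [h]⟩⟩

instance : Countable (Xt a₀) :=
  Function.Injective.countable (f := fun x : Xt a₀ => x.val) (fun x y h => Xt.ext' h)

noncomputable instance : DenselyOrdered (Xt a₀) := by
  constructor
  intro x y hxy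
  rw [lt_iff] at hxy
  obtain ⟨q, hq1, hq2⟩ := exists_between hxy
  rcases eq_or_ne q 0 with rfl | hq0
  · obtain ⟨q', h1, h2⟩ := exists_between hq1
    obtain ⟨z, hz⟩ := mq_surj (a₀ := a₀) (show q' ≠ 0 by intro h; rw [h] at h2; linarith)
    exact ⟨z, lt_iff.mpr (by rw [hz]; exact h1), lt_iff.mpr (by rw [hz]; linarith)⟩
  · obtain ⟨z, hz⟩ := mq_surj (a₀ := a₀) hq0
    exact ⟨z, lt_iff.mpr (by rw [hz]; exact hq1), lt_iff.mpr (by rw [hz]; exact hq2)⟩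

noncomputable instance : NoMaxOrder (Xt a₀) := by
  constructor
  intro x
  obtain ⟨z, hz⟩ := mq_surj (a₀ := a₀) (show |mq a₀ x.1| + 1 ≠ 0 by positivity)
  exact ⟨z, lt_iff.mpr (by rw [hz]; have := abs_nonneg (mq a₀ x.1); have := le_abs_self (mq a₀ x.1); linarith)⟩

noncomputable instance : NoMinOrder (Xt a₀) := by
  constructor
  intro x
  obtain ⟨z, hz⟩ := mq_surj (a₀ := a₀) (show -(|mq a₀ x.1| + 1) ≠ 0 by
    intro h; have : |mq a₀ x.1| + 1 = 0 := by linarith [h]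
    have := abs_nonneg (mq a₀ x.1); linarith)
  refine ⟨z, lt_iff.mpr ?_⟩
  rw [hz]
  have := abs_nonneg (mq a₀ x.1); have := neg_abs_le (mq a₀ x.1); linarith

end Xt

/-- Seeded back-and-forth: any finite partial self-isomorphism of a countable dense
linear order without endpoints extends to an automorphism. -/
theorem exists_orderIso_extending {α : Type*} [LinearOrder α] [Countable α] [DenselyOrdered α]
    [NoMinOrder α] [NoMaxOrder α] [Nonempty α] (p : Order.PartialIso α α) :
    ∃ e : α ≃o α, ∀ ab ∈ p.val, e ab.1 = ab.2 := by
  classical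
  cases nonempty_encodable α
  let to_cofinal : α ⊕ α → Order.Cofinal (Order.PartialIso α α) := fun q ↦
    Sum.recOn q (Order.PartialIso.definedAtLeft α) (Order.PartialIso.definedAtRight α)
  let our_ideal : Order.Ideal (Order.PartialIso α α) := Order.idealOfCofinals p to_cofinal
  let F := fun a => Order.PartialIso.funOfIdeal a our_ideal
    (Order.cofinal_meets_idealOfCofinals _ to_cofinal (Sum.inl a))
  let G := fun b => Order.PartialIso.invOfIdeal b our_ideal
    (Order.cofinal_meets_idealOfCofinals _ to_cofinal (Sum.inr b))
  refine ⟨OrderIso.ofCmpEqCmp (fun a ↦ (F a).val) (fun b ↦ (G b).val) fun a b ↦ ?_, ?_⟩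
  · rcases (F a).prop with ⟨f, hf, ha⟩
    rcases (G b).prop with ⟨g, hg, hb⟩
    rcases our_ideal.directed _ hf _ hg with ⟨m, _, fm, gm⟩
    exact m.prop (a, _) (fm ha) (_, b) (gm hb)
  · intro ab hab
    rcases (F ab.1).prop with ⟨f, hf, ha⟩
    have hp : p ∈ our_ideal := Order.mem_idealOfCofinals p to_cofinal
    rcases our_ideal.directed _ hf _ hp with ⟨m, _, fm, pm⟩
    have := m.prop (ab.1, (F ab.1).val) (fm ha) (ab.1, ab.2) (pm hab)
    simp only [cmp_self_eq_eq] at this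
    exact (cmp_eq_eq_iff _ _).mp this.symm


lemma gamma_not_aab {x y : ℚ} : ¬ gamma x x y := fun h => absurd rfl (gamma_ne h).1

/-- lift an automorphism of the cut order at `a₀` to a permutation of `ℚ`. -/
noncomputable def liftPerm (a₀ : ℚ) (e : Xt a₀ ≃o Xt a₀) : Equiv.Perm ℚ where
  toFun x := if h : x = a₀ then a₀ else (e ⟨x, h⟩).1
  invFun x := if h : x = a₀ then a₀ else (e.symm ⟨x, h⟩).1
  left_inv x := by
    dsimp only
    by_cases h : x = a₀
    · simp [h]
    · rw [dif_neg h, dif_neg (e ⟨x, h⟩).2]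
      exact congrArg Xt.val (e.symm_apply_apply ⟨x, h⟩)
  right_inv x := by
    dsimp only
    by_cases h : x = a₀
    · simp [h]
    · rw [dif_neg h, dif_neg (e.symm ⟨x, h⟩).2]
      exact congrArg Xt.val (e.apply_symm_apply ⟨x, h⟩)

lemma liftPerm_fix (a₀ : ℚ) (e : Xt a₀ ≃o Xt a₀) : liftPerm a₀ e a₀ = a₀ := by
  simp [liftPerm]

lemma liftPerm_apply (a₀ : ℚ) (e : Xt a₀ ≃o Xt a₀) (x : Xt a₀) :
    liftPerm a₀ e x.1 = (e x).1 := by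
  show (if h : x.1 = a₀ then a₀ else (e ⟨x.1, h⟩).1) = (e x).1
  rw [dif_neg x.2]

lemma liftPerm_auto (a₀ : ℚ) (e : Xt a₀ ≃o Xt a₀) : AutoGamma (liftPerm a₀ e) := by
  intro x y z
  set g := liftPerm a₀ e with hg
  -- equalities kill both sides
  rcases eq_or_ne x y with rfl | hxy
  · constructor <;> intro h <;> exact absurd rfl (gamma_ne h).1
  rcases eq_or_ne y z with rfl | hyz
  · constructor <;> intro h <;> exact absurd rfl (gamma_ne h).2.1
  rcases eq_or_ne z x with rfl | hzx
  · constructor <;> intro h <;> exact absurd rfl (gamma_ne h).2.2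
  have key : ∀ u v : ℚ, u ≠ a₀ → v ≠ a₀ → (gamma a₀ (g u) (g v) ↔ gamma a₀ u v) := by
    intro u v hu hv
    have h1 : g u = (e ⟨u, hu⟩).1 := liftPerm_apply a₀ e ⟨u, hu⟩
    have h2 : g v = (e ⟨v, hv⟩).1 := liftPerm_apply a₀ e ⟨v, hv⟩
    rw [h1, h2, ← Xt.lt_iff_gamma, ← Xt.lt_iff_gamma (x := ⟨u, hu⟩) (y := ⟨v, hv⟩)]
    exact e.lt_iff_lt
  have gne : ∀ u : ℚ, u ≠ a₀ → g u ≠ a₀ := by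
    intro u hu
    rw [liftPerm_apply a₀ e ⟨u, hu⟩]
    exact (e ⟨u, hu⟩).2
  rcases eq_or_ne x a₀ with he1 | hx
  · rw [he1, show g a₀ = a₀ from liftPerm_fix a₀ e]
    exact key y z (fun hh => hxy (he1.trans hh.symm)) (fun hh => hzx (hh.trans he1.symm))
  rcases eq_or_ne y a₀ with he2 | hy
  · rw [show (gamma (g x) (g y) (g z) ↔ gamma x y z) ↔
        (gamma (g y) (g z) (g x) ↔ gamma y z x) from iff_congr gamma_cyc gamma_cyc]
    rw [he2, show g a₀ = a₀ from liftPerm_fix a₀ e]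
    exact key z x (fun hh => hyz (he2.trans hh.symm)) hx
  rcases eq_or_ne z a₀ with he3 | hz
  · rw [show (gamma (g x) (g y) (g z) ↔ gamma x y z) ↔
        (gamma (g z) (g x) (g y) ↔ gamma z x y) from
      iff_congr (gamma_cyc.trans gamma_cyc) (gamma_cyc.trans gamma_cyc)]
    rw [he3, show g a₀ = a₀ from liftPerm_fix a₀ e]
    exact key x y hx hy
  -- all distinct from a₀
  have e1 : g x = (e ⟨x, hx⟩).1 := liftPerm_apply a₀ e ⟨x, hx⟩
  have e2 : g y = (e ⟨y, hy⟩).1 := liftPerm_apply a₀ e ⟨y, hy⟩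
  have e3 : g z = (e ⟨z, hz⟩).1 := liftPerm_apply a₀ e ⟨z, hz⟩
  rw [gamma_cut (gne x hx) (gne y hy) (gne z hz) (a₀ := a₀),
      gamma_cut hx hy hz (a₀ := a₀)]
  have pq : ∀ u v : ℚ, ∀ hu : u ≠ a₀, ∀ hv : v ≠ a₀,
      (mq a₀ (g u) < mq a₀ (g v) ↔ mq a₀ u < mq a₀ v) := by
    intro u v hu hv
    have h1 : g u = (e ⟨u, hu⟩).1 := liftPerm_apply a₀ e ⟨u, hu⟩
    have h2 : g v = (e ⟨v, hv⟩).1 := liftPerm_apply a₀ e ⟨v, hv⟩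
    rw [h1, h2]
    exact (Xt.lt_iff (x := e ⟨u, hu⟩)).symm.trans (e.lt_iff_lt.trans Xt.lt_iff)
  exact gamma_pairwise (pq x y hx hy) (pq y z hy hz) (pq z x hz hx)

/-- The main extension lemma: a finite strictly-monotone partial self-map of the cut
order extends to a `gamma`-automorphism of `ℚ` fixing `a₀`. -/
theorem main_ext (a₀ : ℚ) (S : Finset (Xt a₀)) (f : Xt a₀ → Xt a₀)
    (hf : ∀ x ∈ S, ∀ y ∈ S, x < y → f x < f y) :
    ∃ g : Equiv.Perm ℚ, AutoGamma g ∧ g a₀ = a₀ ∧ ∀ x ∈ S, g x.1 = (f x).1 := by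
  classical
  have hcmp : ∀ p ∈ S.image (fun x => (x, f x)), ∀ q ∈ S.image (fun x => (x, f x)),
      cmp p.1 q.1 = cmp p.2 q.2 := by
    intro p hp q hq
    simp only [Finset.mem_image] at hp hq
    obtain ⟨x, hx, rfl⟩ := hp
    obtain ⟨y, hy, rfl⟩ := hq
    rcases lt_trichotomy x y with h | h | h
    · rw [(cmp_eq_lt_iff _ _).mpr h, ((cmp_eq_lt_iff _ _).mpr (hf x hx y hy h)).symm]
    · rw [h, cmp_self_eq_eq, cmp_self_eq_eq]
    · rw [(cmp_eq_gt_iff _ _).mpr h, ((cmp_eq_gt_iff _ _).mpr (hf y hy x hx h)).symm]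
  obtain ⟨e, he⟩ := exists_orderIso_extending (⟨S.image (fun x => (x, f x)), hcmp⟩ :
    Order.PartialIso (Xt a₀) (Xt a₀))
  refine ⟨liftPerm a₀ e, liftPerm_auto a₀ e, liftPerm_fix a₀ e, ?_⟩
  intro x hx
  rw [liftPerm_apply a₀ e x]
  have := he (x, f x) (Finset.mem_image_of_mem _ hx)
  rw [this]

variable {α : Type*} [LinearOrder α] [DenselyOrdered α] [NoMinOrder α] [NoMaxOrder α] [Nonempty α]

/-- A point strictly between `lo` and `hi`, avoiding the finite set `F`. -/
lemma exists_sep (F lo hi : Finset α) (h : ∀ x ∈ lo, ∀ y ∈ hi, x < y) :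
    ∃ m, m ∉ F ∧ (∀ x ∈ lo, x < m) ∧ ∀ y ∈ hi, m < y := by
  classical
  induction F using Finset.induction generalizing hi with
  | empty =>
    obtain ⟨m, h1, h2⟩ := Order.exists_between_finsets lo hi h
    exact ⟨m, Finset.notMem_empty m, h1, h2⟩
  | @insert f F' hfF ih =>
    obtain ⟨m, hm, h1, h2⟩ := ih hi h
    obtain ⟨m₁, hm₁, g1, g2⟩ := ih (insert m hi)
      (by intro x hx y hy
          rcases Finset.mem_insert.mp hy with rfl | hy
          · exact h1 x hx
          · exact h x hx y hy)
    rcases eq_or_ne m f with rfl | hmf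
    · refine ⟨m₁, ?_, g1, fun y hy => g2 y (Finset.mem_insert_of_mem hy)⟩
      rw [Finset.mem_insert]
      push_neg
      exact ⟨(g2 m (Finset.mem_insert_self m hi)).ne, hm₁⟩
    · refine ⟨m, ?_, h1, h2⟩
      rw [Finset.mem_insert]
      push_neg
      exact ⟨hmf, hm⟩

/-- Targets for moving the elements of `B` to the bottom of their `A`-intervals,
below all elements of `C` in the same interval. -/
lemma exists_targets_low (A C : Finset α) (B : Finset α) (hBA : ∀ b ∈ B, b ∉ A) :
    ∃ t : α → α,
      (∀ b ∈ B, ∀ b' ∈ B, b < b' → t b < t b') ∧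
      ∀ b ∈ B, (∀ a ∈ A, (a < t b ↔ a < b)) ∧ t b ∉ A ∧ t b ∉ C ∧
        (∀ c ∈ C, (∀ a ∈ A, (a < c ↔ a < b)) → t b < c) := by
  classical
  induction B using Finset.induction_on_max with
  | empty => exact ⟨id, by simp, by simp⟩
  | insert b₀ s hmax ih =>
    obtain ⟨t', ht'mono, ht'⟩ := ih (fun b hb => hBA b (Finset.mem_insert_of_mem hb))
    have hb₀A : b₀ ∉ A := hBA b₀ (Finset.mem_insert_self _ _)
    obtain ⟨w, hwF, hwL, hwU⟩ := exists_sep (A ∪ C ∪ s.image t')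
      ((A.filter (· < b₀)) ∪ ((s.filter (fun x => ∀ a ∈ A, a < x ↔ a < b₀)).image t'))
      ((A.filter (fun a => b₀ < a)) ∪ (C.filter (fun c => ∀ a ∈ A, a < c ↔ a < b₀)))
      (by
        intro l hl u hu
        rcases Finset.mem_union.mp hl with hl | hl <;> rcases Finset.mem_union.mp hu with hu | hu
        · rw [Finset.mem_filter] at hl hu
          exact hl.2.trans hu.2
        · rw [Finset.mem_filter] at hl hu
          exact (hu.2 l hl.1).mpr hl.2
        · obtain ⟨x, hx, rfl⟩ := Finset.mem_image.mp hl
          rw [Finset.mem_filter] at hx hu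
          obtain ⟨hx1, hx2⟩ := hx
          have hnot : ¬ (u < t' x) := by
            rw [(ht' x hx1).1 u hu.1]
            intro hcon
            exact absurd (hcon.trans (hmax x hx1)) (lt_asymm hu.2)
          exact lt_of_le_of_ne (not_lt.mp hnot) (fun hh => (ht' x hx1).2.1 (hh ▸ hu.1))
        · obtain ⟨x, hx, rfl⟩ := Finset.mem_image.mp hl
          rw [Finset.mem_filter] at hx hu
          exact (ht' x hx.1).2.2.2 u hu.1 (fun a ha => (hu.2 a ha).trans (hx.2 a ha).symm))
    have hwA : w ∉ A := fun hh => hwF (by simp [hh])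
    have hwC : w ∉ C := fun hh => hwF (by simp [hh])
    refine ⟨Function.update t' b₀ w, ?_, ?_⟩
    · intro b hb b' hb' hbb'
      rcases Finset.mem_insert.mp hb with hbeq | hbs
      · subst hbeq
        rcases Finset.mem_insert.mp hb' with hbeq' | hbs'
        · subst hbeq'; exact absurd hbb' (lt_irrefl _)
        · exact absurd (hbb'.trans (hmax b' hbs')) (lt_irrefl _)
      · have hbne : b ≠ b₀ := (hmax b hbs).ne
        rw [Function.update_of_ne hbne]
        rcases Finset.mem_insert.mp hb' with hbeq' | hbs'
        · rw [hbeq', Function.update_self]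
          by_cases hpos : ∀ a ∈ A, a < b ↔ a < b₀
          · exact hwL (t' b) (Finset.mem_union_right _
              (Finset.mem_image_of_mem _ (Finset.mem_filter.mpr ⟨hbs, hpos⟩)))
          · push_neg at hpos
            obtain ⟨a, ha, hiff⟩ := hpos
            have hbb₀ : b < b₀ := hmax b hbs
            have h1 : a < b₀ ∧ ¬ a < b := by
              rcases hiff with ⟨h2, h3⟩ | ⟨h2, h3⟩
              · exact absurd (h2.trans hbb₀) (not_lt.mpr h3)
              · exact ⟨h3, not_lt.mpr h2⟩
            have hta : t' b < a := by
              have hnot : ¬ a < t' b := by rw [(ht' b hbs).1 a ha]; exact h1.2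
              exact lt_of_le_of_ne (not_lt.mp hnot) (fun hh => (ht' b hbs).2.1 (hh ▸ ha))
            exact hta.trans (hwL a (Finset.mem_union_left _
              (Finset.mem_filter.mpr ⟨ha, h1.1⟩)))
        · rw [Function.update_of_ne (hmax b' hbs').ne]
          exact ht'mono b hbs b' hbs' hbb'
    · intro b hb
      rcases Finset.mem_insert.mp hb with hbeq | hbs
      · subst hbeq
        rw [Function.update_self]
        refine ⟨?_, hwA, hwC, ?_⟩
        · intro a ha
          constructor
          · intro haw
            by_contra hab
            have hba : _ < a := lt_of_le_of_ne (not_lt.mp hab) (fun hh => hb₀A (hh ▸ ha))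
            exact absurd (hwU a (Finset.mem_union_left _
              (Finset.mem_filter.mpr ⟨ha, hba⟩))) (lt_asymm haw)
          · intro hab
            exact hwL a (Finset.mem_union_left _ (Finset.mem_filter.mpr ⟨ha, hab⟩))
        · intro c hc hcpos
          exact hwU c (Finset.mem_union_right _ (Finset.mem_filter.mpr ⟨hc, hcpos⟩))
      · rw [Function.update_of_ne (hmax b hbs).ne]
        exact ht' b hbs

/-- Targets for moving the elements of `C` to the top of their `A`-intervals,
above all elements of `B` in the same interval. -/
lemma exists_targets_high (A B : Finset α) (C : Finset α) (hCA : ∀ c ∈ C, c ∉ A)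
    (hBA : ∀ b ∈ B, b ∉ A) :
    ∃ t : α → α,
      (∀ c ∈ C, ∀ c' ∈ C, c < c' → t c < t c') ∧
      ∀ c ∈ C, (∀ a ∈ A, (a < t c ↔ a < c)) ∧ t c ∉ A ∧ t c ∉ B ∧
        (∀ b ∈ B, (∀ a ∈ A, (a < b ↔ a < c)) → b < t c) := by
  classical
  induction C using Finset.induction_on_min with
  | empty => exact ⟨id, by simp, by simp⟩
  | insert c₀ s hmin ih =>
    obtain ⟨t', ht'mono, ht'⟩ := ih (fun c hc => hCA c (Finset.mem_insert_of_mem hc))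
    have hc₀A : c₀ ∉ A := hCA c₀ (Finset.mem_insert_self _ _)
    obtain ⟨w, hwF, hwL, hwU⟩ := exists_sep (A ∪ B ∪ s.image t')
      ((A.filter (· < c₀)) ∪ (B.filter (fun b => ∀ a ∈ A, a < b ↔ a < c₀)))
      ((A.filter (fun a => c₀ < a)) ∪ ((s.filter (fun x => ∀ a ∈ A, a < x ↔ a < c₀)).image t'))
      (by
        intro l hl u hu
        rcases Finset.mem_union.mp hl with hl | hl <;> rcases Finset.mem_union.mp hu with hu | hu
        · rw [Finset.mem_filter] at hl hu
          exact hl.2.trans hu.2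
        · obtain ⟨x, hx, rfl⟩ := Finset.mem_image.mp hu
          rw [Finset.mem_filter] at hl hx
          exact ((ht' x hx.1).1 l hl.1).mpr ((hx.2 l hl.1).mpr hl.2)
        · rw [Finset.mem_filter] at hl hu
          have hne : l ≠ u := fun hh => hBA l hl.1 (hh ▸ hu.1)
          have hnot : ¬ u < l := fun hcon => absurd ((hl.2 u hu.1).mp hcon) (lt_asymm hu.2)
          exact lt_of_le_of_ne (not_lt.mp hnot) hne
        · obtain ⟨x, hx, rfl⟩ := Finset.mem_image.mp hu
          rw [Finset.mem_filter] at hl hx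
          exact (ht' x hx.1).2.2.2 l hl.1 (fun a ha => (hl.2 a ha).trans (hx.2 a ha).symm))
    have hwA : w ∉ A := fun hh => hwF (by simp [hh])
    have hwB : w ∉ B := fun hh => hwF (by simp [hh])
    refine ⟨Function.update t' c₀ w, ?_, ?_⟩
    · intro c hc c' hc' hcc'
      rcases Finset.mem_insert.mp hc with hceq | hcs
      · subst hceq
        rw [Function.update_self]
        rcases Finset.mem_insert.mp hc' with hceq' | hcs'
        · subst hceq'; exact absurd hcc' (lt_irrefl _)
        · rw [Function.update_of_ne (hmin c' hcs').ne']
          by_cases hpos : ∀ a ∈ A, a < c' ↔ a < c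
          · exact hwU (t' c') (Finset.mem_union_right _
              (Finset.mem_image_of_mem _ (Finset.mem_filter.mpr ⟨hcs', hpos⟩)))
          · push_neg at hpos
            obtain ⟨a, ha, hiff⟩ := hpos
            have h1 : a < c' ∧ ¬ a < c := by
              rcases hiff with ⟨h2, h3⟩ | ⟨h2, h3⟩
              · exact ⟨h2, not_lt.mpr h3⟩
              · exact absurd (h3.trans hcc') (not_lt.mpr h2)
            have haU : c < a := lt_of_le_of_ne (not_lt.mp h1.2) (fun hh => hc₀A (hh ▸ ha))
            have h2 : a < t' c' := ((ht' c' hcs').1 a ha).mpr h1.1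
            exact (hwU a (Finset.mem_union_left _
              (Finset.mem_filter.mpr ⟨ha, haU⟩))).trans h2
      · rw [Function.update_of_ne (hmin c hcs).ne']
        rcases Finset.mem_insert.mp hc' with hceq' | hcs'
        · subst hceq'; exact absurd (hcc'.trans (hmin c hcs)) (lt_irrefl _)
        · rw [Function.update_of_ne (hmin c' hcs').ne']
          exact ht'mono c hcs c' hcs' hcc'
    · intro c hc
      rcases Finset.mem_insert.mp hc with hceq | hcs
      · subst hceq
        rw [Function.update_self]
        refine ⟨?_, hwA, hwB, ?_⟩
        · intro a ha
          constructor
          · intro haw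
            by_contra hab
            have hba : _ < a := lt_of_le_of_ne (not_lt.mp hab) (fun hh => hc₀A (hh ▸ ha))
            exact absurd (hwU a (Finset.mem_union_left _
              (Finset.mem_filter.mpr ⟨ha, hba⟩))) (lt_asymm haw)
          · intro hab
            exact hwL a (Finset.mem_union_left _ (Finset.mem_filter.mpr ⟨ha, hab⟩))
        · intro b hb hbpos
          exact hwL b (Finset.mem_union_right _ (Finset.mem_filter.mpr ⟨hb, hbpos⟩))
      · rw [Function.update_of_ne (hmin c hcs).ne']
        exact ht' c hcs



/-- The independence relation: in each arc of `A`, `B` comes strictly before `C`. -/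
def IndR (A B C : Finset ℚ) : Prop :=
  ∀ b ∈ B, b ∉ A → ∀ c ∈ C, c ∉ A → ∃ a ∈ A, gamma c a b

lemma mem_pimg {g : Equiv.Perm ℚ} {s : Finset ℚ} {x : ℚ} :
    x ∈ pimg g s ↔ ∃ y ∈ s, g y = x := Finset.mem_map

lemma pimg_mem {g : Equiv.Perm ℚ} {s : Finset ℚ} {y : ℚ} (h : y ∈ s) : g y ∈ pimg g s :=
  mem_pimg.mpr ⟨y, h, rfl⟩

lemma pimg_mem_iff {g : Equiv.Perm ℚ} {s : Finset ℚ} {y : ℚ} : g y ∈ pimg g s ↔ y ∈ s := by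
  constructor
  · intro h
    obtain ⟨z, hz, hzy⟩ := mem_pimg.mp h
    rwa [← g.injective hzy]
  · exact pimg_mem

lemma gamma_chain {a₀ c a b : ℚ} (h1 : gamma a₀ c a) (h2 : gamma a₀ a b) : gamma c a b := by
  have hc : c ≠ a₀ := (gamma_ne h1).1.symm
  have ha : a ≠ a₀ := (gamma_ne h1).2.2
  have hb : b ≠ a₀ := (gamma_ne h2).2.2
  rw [gamma_cut hc ha hb (a₀ := a₀)]
  rw [← mq_lt_iff hc ha] at h1
  rw [← mq_lt_iff ha hb] at h2
  exact Or.inl ⟨h1, h2⟩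

lemma gamma_split {a₀ c a b : ℚ} (h : gamma c a b) (hcb : gamma a₀ c b) (ha : a ≠ a₀) :
    gamma a₀ c a ∧ gamma a₀ a b := by
  have hc : c ≠ a₀ := (gamma_ne hcb).1.symm
  have hb : b ≠ a₀ := (gamma_ne hcb).2.2
  rw [gamma_cut hc ha hb (a₀ := a₀)] at h
  rw [← mq_lt_iff hc hb] at hcb
  have key : mq a₀ c < mq a₀ a ∧ mq a₀ a < mq a₀ b := by
    rcases h with ⟨h1, h2⟩ | ⟨h1, h2⟩ | ⟨h1, h2⟩
    · exact ⟨h1, h2⟩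
    · exact absurd hcb (by intro hh; linarith)
    · exact absurd hcb (by intro hh; linarith)
  exact ⟨(mq_lt_iff hc ha).mp key.1, (mq_lt_iff ha hb).mp key.2⟩

lemma gamma_total {a₀ b c : ℚ} (hb : b ≠ a₀) (hc : c ≠ a₀) (hbc : b ≠ c) :
    gamma a₀ b c ∨ gamma a₀ c b := by
  have : mq a₀ b ≠ mq a₀ c := fun h => hbc (mq_inj hb hc h)
  rcases lt_or_gt_of_ne this with h | h
  · exact Or.inl ((mq_lt_iff hb hc).mp h)
  · exact Or.inr ((mq_lt_iff hc hb).mp h)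

lemma gamma_asymm {a₀ x y : ℚ} (h : gamma a₀ x y) : ¬ gamma a₀ y x := by
  intro h'
  have hx : x ≠ a₀ := (gamma_ne h).1.symm
  have hy : y ≠ a₀ := (gamma_ne h).2.2
  rw [← mq_lt_iff hx hy] at h
  rw [← mq_lt_iff hy hx] at h'
  exact absurd h' (lt_asymm h)

/-- pair characterization of the independence witness in terms of cut-order data. -/
lemma ind_pair {A : Finset ℚ} {a₀ b c : ℚ} (ha₀ : a₀ ∈ A) (hb : b ∉ A) (hc : c ∉ A) :
    (∃ a ∈ A, gamma c a b) ↔ (gamma a₀ b c ∨ ∃ a ∈ A, gamma a₀ c a ∧ gamma a₀ a b) := by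
  have hba : b ≠ a₀ := fun hh => hb (hh ▸ ha₀)
  have hca : c ≠ a₀ := fun hh => hc (hh ▸ ha₀)
  constructor
  · rintro ⟨a, haA, hg⟩
    rcases eq_or_ne a a₀ with rfl | hne
    · exact Or.inl (gamma_cyc.mp hg)
    · rcases gamma_total hba hca (gamma_ne hg).2.2 with hg1 | hg1
      · exact Or.inl hg1
      · exact Or.inr ⟨a, haA, gamma_split hg hg1 hne⟩
  · rintro (hg | ⟨a, haA, hg1, hg2⟩)
    · exact ⟨a₀, ha₀, gamma_cyc.mp (gamma_cyc.mp hg)⟩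
    · exact ⟨a, haA, gamma_chain hg1 hg2⟩

/-- view a finite set of rationals inside the cut order at `a₀`. -/
noncomputable def toX (a₀ : ℚ) (s : Finset ℚ) : Finset (Xt a₀) :=
  (s.erase a₀).attach.image (fun x => ⟨x.1, (Finset.mem_erase.mp x.2).1⟩)

lemma mem_toX {a₀ : ℚ} {s : Finset ℚ} {x : Xt a₀} : x ∈ toX a₀ s ↔ x.1 ∈ s := by
  unfold toX
  constructor
  · intro h
    obtain ⟨y, _, rfl⟩ := Finset.mem_image.mp h
    exact Finset.mem_of_mem_erase y.2
  · intro h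
    exact Finset.mem_image.mpr ⟨⟨x.1, Finset.mem_erase.mpr ⟨x.2, h⟩⟩, Finset.mem_attach _ _, rfl⟩

lemma swir_exLeft (A B C : Finset ℚ) (hA : A.Nonempty) :
    ∃ B' : Finset ℚ, EquivOver AutoGamma A B B' ∧ IndR A B' C := by
  classical
  obtain ⟨a₀, ha₀⟩ := hA
  set Ab : Finset (Xt a₀) := toX a₀ A with hAb
  set Bb : Finset (Xt a₀) := toX a₀ (B \ A) with hBb
  set Cb : Finset (Xt a₀) := toX a₀ (C \ A) with hCb
  have hBA : ∀ b ∈ Bb, b ∉ Ab := fun b hb hbA =>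
    (Finset.mem_sdiff.mp (mem_toX.mp hb)).2 (mem_toX.mp hbA)
  obtain ⟨t, htmono, ht⟩ := exists_targets_low Ab Cb Bb hBA
  set f : Xt a₀ → Xt a₀ := fun x => if x ∈ Bb then t x else x with hfdef
  have hf : ∀ x ∈ Ab ∪ Bb, ∀ y ∈ Ab ∪ Bb, x < y → f x < f y := by
    intro x hx y hy hxy
    by_cases hxB : x ∈ Bb <;> by_cases hyB : y ∈ Bb <;>
      simp only [hfdef, hxB, hyB, if_pos, if_neg, if_true, if_false]
    · exact htmono x hxB y hyB hxy
    · have hyA : y ∈ Ab := (Finset.mem_union.mp hy).resolve_right hyB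
      have hnot : ¬ y < t x := by
        rw [(ht x hxB).1 y hyA]
        exact lt_asymm hxy
      exact lt_of_le_of_ne (not_lt.mp hnot) (fun hh => (ht x hxB).2.1 (hh ▸ hyA))
    · have hxA : x ∈ Ab := (Finset.mem_union.mp hx).resolve_right hxB
      exact ((ht y hyB).1 x hxA).mpr hxy
    · exact hxy
  obtain ⟨g, hgauto, hga₀, hgS⟩ := main_ext a₀ (Ab ∪ Bb) f hf
  have hfix : Fixes g A := by
    intro a ha
    rcases eq_or_ne a a₀ with rfl | hne
    · exact hga₀
    · have haX : (⟨a, hne⟩ : Xt a₀) ∈ Ab := mem_toX.mpr ha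
      have := hgS ⟨a, hne⟩ (Finset.mem_union_left _ haX)
      rw [this, hfdef]
      have : (⟨a, hne⟩ : Xt a₀) ∉ Bb := fun hh =>
        (Finset.mem_sdiff.mp (mem_toX.mp hh)).2 ha
      simp only [this, if_neg, if_false]
  refine ⟨pimg g B, ⟨g, hgauto, hfix, rfl⟩, ?_⟩
  intro b' hb' hb'A c hc hcA
  obtain ⟨b, hb, rfl⟩ := mem_pimg.mp hb'
  have hbA : b ∉ A := fun hh => hb'A (by rw [hfix b hh]; exact hh)
  have hbne : b ≠ a₀ := fun hh => hbA (hh ▸ ha₀)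
  have hcne : c ≠ a₀ := fun hh => hcA (hh ▸ ha₀)
  have hbB : (⟨b, hbne⟩ : Xt a₀) ∈ Bb := mem_toX.mpr (Finset.mem_sdiff.mpr ⟨hb, hbA⟩)
  have hgb : g b = (t ⟨b, hbne⟩).1 := by
    have := hgS ⟨b, hbne⟩ (Finset.mem_union_right _ hbB)
    rw [this, hfdef]
    simp only [hbB, if_pos, if_true]
  have hcC : (⟨c, hcne⟩ : Xt a₀) ∈ Cb := mem_toX.mpr (Finset.mem_sdiff.mpr ⟨hc, hcA⟩)
  rw [ind_pair ha₀ hb'A hcA]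
  -- claim: t b < c or some a of A lies strictly between
  by_cases hpos : ∀ a ∈ Ab, a < (⟨c, hcne⟩ : Xt a₀) ↔ a < (⟨b, hbne⟩ : Xt a₀)
  · left
    have := (ht _ hbB).2.2.2 _ hcC hpos
    rw [Xt.lt_iff_gamma] at this
    rw [hgb]
    exact this
  · push_neg at hpos
    obtain ⟨a, haA, hiff⟩ := hpos
    rcases hiff with ⟨h1, h2⟩ | ⟨h1, h2⟩
    · -- a < c̃ and b̃ ≤ a : then t b̃ < a < c̃, left disjunct again
      left
      have hnb : ¬ a < (⟨b, hbne⟩ : Xt a₀) := not_lt.mpr h2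
      have hta : t ⟨b, hbne⟩ < a := by
        have : ¬ a < t ⟨b, hbne⟩ := by rw [(ht _ hbB).1 a haA]; exact hnb
        exact lt_of_le_of_ne (not_lt.mp this) (fun hh => (ht _ hbB).2.1 (hh ▸ haA))
      have := hta.trans h1
      rw [Xt.lt_iff_gamma] at this
      rw [hgb]
      exact this
    · -- a < b̃ and c̃ ≤ a : right disjunct with witness a
      right
      refine ⟨a.1, mem_toX.mp haA, ?_, ?_⟩
      · have hca : (⟨c, hcne⟩ : Xt a₀) < a := lt_of_le_of_ne h1
          (fun hh => hcA (by rw [← hh] at haA; exact mem_toX.mp haA))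
        rw [Xt.lt_iff_gamma] at hca
        exact hca
      · have hab : a < t ⟨b, hbne⟩ := ((ht _ hbB).1 a haA).mpr h2
        rw [Xt.lt_iff_gamma] at hab
        rw [hgb]
        exact hab


lemma gamma_cut_trans {a₀ x y z : ℚ} (h1 : gamma a₀ x y) (h2 : gamma a₀ y z) :
    gamma a₀ x z := by
  have hx : x ≠ a₀ := (gamma_ne h1).1.symm
  have hy : y ≠ a₀ := (gamma_ne h1).2.2
  have hz : z ≠ a₀ := (gamma_ne h2).2.2
  rw [← mq_lt_iff hx hy] at h1
  rw [← mq_lt_iff hy hz] at h2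
  exact (mq_lt_iff hx hz).mp (h1.trans h2)

lemma swir_exRight (A B C : Finset ℚ) (hA : A.Nonempty) :
    ∃ C' : Finset ℚ, EquivOver AutoGamma A C C' ∧ IndR A B C' := by
  classical
  obtain ⟨a₀, ha₀⟩ := hA
  set Ab : Finset (Xt a₀) := toX a₀ A with hAb
  set Bb : Finset (Xt a₀) := toX a₀ (B \ A) with hBb
  set Cb : Finset (Xt a₀) := toX a₀ (C \ A) with hCb
  have hCA : ∀ c ∈ Cb, c ∉ Ab := fun c hc hcA =>
    (Finset.mem_sdiff.mp (mem_toX.mp hc)).2 (mem_toX.mp hcA)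
  have hBA : ∀ b ∈ Bb, b ∉ Ab := fun b hb hbA =>
    (Finset.mem_sdiff.mp (mem_toX.mp hb)).2 (mem_toX.mp hbA)
  obtain ⟨t, htmono, ht⟩ := exists_targets_high Ab Bb Cb hCA hBA
  set f : Xt a₀ → Xt a₀ := fun x => if x ∈ Cb then t x else x with hfdef
  have hf : ∀ x ∈ Ab ∪ Cb, ∀ y ∈ Ab ∪ Cb, x < y → f x < f y := by
    intro x hx y hy hxy
    by_cases hxC : x ∈ Cb <;> by_cases hyC : y ∈ Cb <;>
      simp only [hfdef, hxC, hyC, if_pos, if_neg, if_true, if_false]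
    · exact htmono x hxC y hyC hxy
    · have hyA : y ∈ Ab := (Finset.mem_union.mp hy).resolve_right hyC
      have hnot : ¬ y < t x := by
        rw [(ht x hxC).1 y hyA]
        exact lt_asymm hxy
      exact lt_of_le_of_ne (not_lt.mp hnot) (fun hh => (ht x hxC).2.1 (hh ▸ hyA))
    · have hxA : x ∈ Ab := (Finset.mem_union.mp hx).resolve_right hxC
      exact ((ht y hyC).1 x hxA).mpr hxy
    · exact hxy
  obtain ⟨g, hgauto, hga₀, hgS⟩ := main_ext a₀ (Ab ∪ Cb) f hf
  have hfix : Fixes g A := by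
    intro a ha
    rcases eq_or_ne a a₀ with rfl | hne
    · exact hga₀
    · have haX : (⟨a, hne⟩ : Xt a₀) ∈ Ab := mem_toX.mpr ha
      have := hgS ⟨a, hne⟩ (Finset.mem_union_left _ haX)
      rw [this, hfdef]
      have : (⟨a, hne⟩ : Xt a₀) ∉ Cb := fun hh =>
        (Finset.mem_sdiff.mp (mem_toX.mp hh)).2 ha
      simp only [this, if_neg, if_false]
  refine ⟨pimg g C, ⟨g, hgauto, hfix, rfl⟩, ?_⟩
  intro b hb hbA c' hc' hc'A
  obtain ⟨c, hc, rfl⟩ := mem_pimg.mp hc'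
  have hcA : c ∉ A := fun hh => hc'A (by rw [hfix c hh]; exact hh)
  have hbne : b ≠ a₀ := fun hh => hbA (hh ▸ ha₀)
  have hcne : c ≠ a₀ := fun hh => hcA (hh ▸ ha₀)
  have hbB : (⟨b, hbne⟩ : Xt a₀) ∈ Bb := mem_toX.mpr (Finset.mem_sdiff.mpr ⟨hb, hbA⟩)
  have hcC : (⟨c, hcne⟩ : Xt a₀) ∈ Cb := mem_toX.mpr (Finset.mem_sdiff.mpr ⟨hc, hcA⟩)
  have hgc : g c = (t ⟨c, hcne⟩).1 := by
    have := hgS ⟨c, hcne⟩ (Finset.mem_union_right _ hcC)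
    rw [this, hfdef]
    simp only [hcC, if_pos, if_true]
  rw [ind_pair ha₀ hbA hc'A]
  by_cases hpos : ∀ a ∈ Ab, a < (⟨b, hbne⟩ : Xt a₀) ↔ a < (⟨c, hcne⟩ : Xt a₀)
  · left
    have := (ht _ hcC).2.2.2 _ hbB hpos
    rw [Xt.lt_iff_gamma] at this
    rw [hgc]
    exact this
  · push_neg at hpos
    obtain ⟨a, haA, hiff⟩ := hpos
    rcases hiff with ⟨h1, h2⟩ | ⟨h1, h2⟩
    · -- a < b̃ and c̃ ≤ a : right disjunct, a is between g c and b
      right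
      refine ⟨a.1, mem_toX.mp haA, ?_, ?_⟩
      · have hnc : ¬ a < t ⟨c, hcne⟩ := by
          rw [(ht _ hcC).1 a haA]
          exact not_lt.mpr h2
        have hta : t ⟨c, hcne⟩ < a :=
          lt_of_le_of_ne (not_lt.mp hnc) (fun hh => (ht _ hcC).2.1 (hh ▸ haA))
        rw [Xt.lt_iff_gamma] at hta
        rw [hgc]
        exact hta
      · have := h1
        rw [Xt.lt_iff_gamma] at this
        exact this
    · -- b̃ ≤ a and a < c̃ : left disjunct, b̃ < a < t c̃
      left
      have hba : (⟨b, hbne⟩ : Xt a₀) < a := lt_of_le_of_ne h1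
        (fun hh => hbA (by rw [← hh] at haA; exact mem_toX.mp haA))
      have hat : a < t ⟨c, hcne⟩ := ((ht _ hcC).1 a haA).mpr h2
      have := hba.trans hat
      rw [Xt.lt_iff_gamma] at this
      rw [hgc]
      exact this

lemma swir_staLeft (A B C : Finset ℚ) (hA : A.Nonempty)
    (hBC : IndR A B C) (g : Equiv.Perm ℚ) (hB'C : IndR A (pimg g B) C)
    (hgauto : AutoGamma g) (hgfix : Fixes g A) :
    ∃ h : Equiv.Perm ℚ, AutoGamma h ∧ Fixes h (A ∪ C) ∧ ∀ b ∈ B, h b = g b := by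
  classical
  obtain ⟨a₀, ha₀⟩ := hA
  have hga₀ : g a₀ = a₀ := hgfix a₀ ha₀
  have hgne : ∀ x : ℚ, x ≠ a₀ → g x ≠ a₀ :=
    fun x hx hh => hx (g.injective (hh.trans hga₀.symm))
  have hgA : ∀ x : ℚ, g x ∈ A → x ∈ A := by
    intro x hx
    have h1 := hgfix (g x) hx
    have h2 := g.injective h1
    rwa [← h2]
  have hpres : ∀ u v : ℚ, gamma a₀ u v → gamma a₀ (g u) (g v) := by
    intro u v h
    have := hgauto a₀ u v
    rw [hga₀] at this
    exact this.mpr h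
  have hBCA : ∀ x, x ∈ B → x ∈ C → x ∈ A := by
    intro x hxB hxC
    by_contra hxA
    obtain ⟨a, _, hg⟩ := hBC x hxB hxA x hxC hxA
    exact (gamma_ne hg).2.2 rfl
  set S : Finset (Xt a₀) := toX a₀ (A ∪ B ∪ C) with hS
  set f : Xt a₀ → Xt a₀ :=
    fun x => if x.1 ∈ B \ A then ⟨g x.1, hgne x.1 x.2⟩ else x with hfdef
  have hf : ∀ x ∈ S, ∀ y ∈ S, x < y → f x < f y := by
    intro x hx y hy hxy
    have hxy' : gamma a₀ x.1 y.1 := Xt.lt_iff_gamma.mp hxy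
    by_cases hxB : x.1 ∈ B \ A <;> by_cases hyB : y.1 ∈ B \ A <;>
      simp only [hfdef, hxB, hyB, if_pos, if_neg, if_true, if_false]
    · exact Xt.lt_iff_gamma.mpr (hpres _ _ hxy')
    · -- x ∈ B\A, y not
      by_cases hyA : y.1 ∈ A
      · have : gamma a₀ (g x.1) (g y.1) := hpres _ _ hxy'
        rw [hgfix y.1 hyA] at this
        exact Xt.lt_iff_gamma.mpr this
      · -- y ∈ C \ A
        have hyC : y.1 ∈ C := by
          have := mem_toX.mp hy
          rcases Finset.mem_union.mp this with h1 | h1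
          · rcases Finset.mem_union.mp h1 with h2 | h2
            · exact absurd h2 hyA
            · exact absurd (Finset.mem_sdiff.mpr ⟨h2, hyA⟩) hyB
          · exact h1
        obtain ⟨hxB', hxA⟩ := Finset.mem_sdiff.mp hxB
        have hgxB' : g x.1 ∈ pimg g B := pimg_mem hxB'
        have hgxA : g x.1 ∉ A := fun hh => hxA (hgA _ hh)
        have := (ind_pair ha₀ hgxA hyA).mp (hB'C _ hgxB' hgxA _ hyC hyA)
        rcases this with h1 | ⟨a, haA, hya, hagx⟩
        · exact Xt.lt_iff_gamma.mpr h1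
        · exfalso
          have hxa : gamma a₀ x.1 a := gamma_cut_trans hxy' hya
          have : gamma a₀ (g x.1) (g a) := hpres _ _ hxa
          rw [hgfix a haA] at this
          exact gamma_asymm this hagx
    · -- y ∈ B\A, x not
      by_cases hxA : x.1 ∈ A
      · have : gamma a₀ (g x.1) (g y.1) := hpres _ _ hxy'
        rw [hgfix x.1 hxA] at this
        exact Xt.lt_iff_gamma.mpr this
      · have hxC : x.1 ∈ C := by
          have := mem_toX.mp hx
          rcases Finset.mem_union.mp this with h1 | h1
          · rcases Finset.mem_union.mp h1 with h2 | h2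
            · exact absurd h2 hxA
            · exact absurd (Finset.mem_sdiff.mpr ⟨h2, hxA⟩) hxB
          · exact h1
        obtain ⟨hyB', hyA⟩ := Finset.mem_sdiff.mp hyB
        have := (ind_pair ha₀ hyA hxA).mp (hBC _ hyB' hyA _ hxC hxA)
        rcases this with h1 | ⟨a, haA, hxa, hay⟩
        · exact absurd h1 (gamma_asymm hxy')
        · have : gamma a₀ a (g y.1) := by
            have := hpres _ _ hay
            rwa [hgfix a haA] at this
          exact Xt.lt_iff_gamma.mpr (gamma_cut_trans hxa this)
    · exact hxy
  obtain ⟨h, hhauto, hha₀, hhS⟩ := main_ext a₀ S f hf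
  refine ⟨h, hhauto, ?_, ?_⟩
  · intro q hq
    rcases eq_or_ne q a₀ with rfl | hqne
    · exact hha₀
    · have hqS : (⟨q, hqne⟩ : Xt a₀) ∈ S := by
        apply mem_toX.mpr
        rcases Finset.mem_union.mp hq with h1 | h1
        · exact Finset.mem_union_left _ (Finset.mem_union_left _ h1)
        · exact Finset.mem_union_right _ h1
      have heq := hhS _ hqS
      rw [heq, hfdef]
      have hnot : q ∉ B \ A := by
        intro hh
        obtain ⟨hqB, hqA⟩ := Finset.mem_sdiff.mp hh
        rcases Finset.mem_union.mp hq with h1 | h1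
        · exact hqA h1
        · exact hqA (hBCA q hqB h1)
      simp only [hnot, if_neg, if_false]
  · intro b hb
    rcases eq_or_ne b a₀ with rfl | hbne
    · rw [hha₀, hgfix _ ha₀]
    · have hbS : (⟨b, hbne⟩ : Xt a₀) ∈ S := by
        apply mem_toX.mpr
        exact Finset.mem_union_left _ (Finset.mem_union_right _ hb)
      have heq := hhS _ hbS
      rw [heq, hfdef]
      by_cases hbBA : b ∈ B \ A
      · simp only [hbBA, if_pos, if_true]
      · have hbA : b ∈ A := by
          by_contra hh
          exact hbBA (Finset.mem_sdiff.mpr ⟨hb, hh⟩)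
        simp only [hbBA, if_neg, if_false]
        exact (hgfix b hbA).symm

lemma swir_staRight (A B C : Finset ℚ) (hA : A.Nonempty)
    (hBC : IndR A B C) (g : Equiv.Perm ℚ) (hBC' : IndR A B (pimg g C))
    (hgauto : AutoGamma g) (hgfix : Fixes g A) :
    ∃ h : Equiv.Perm ℚ, AutoGamma h ∧ Fixes h (A ∪ B) ∧ ∀ c ∈ C, h c = g c := by
  classical
  obtain ⟨a₀, ha₀⟩ := hA
  have hga₀ : g a₀ = a₀ := hgfix a₀ ha₀
  have hgne : ∀ x : ℚ, x ≠ a₀ → g x ≠ a₀ :=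
    fun x hx hh => hx (g.injective (hh.trans hga₀.symm))
  have hgA : ∀ x : ℚ, g x ∈ A → x ∈ A := by
    intro x hx
    have h1 := hgfix (g x) hx
    have h2 := g.injective h1
    rwa [← h2]
  have hpres : ∀ u v : ℚ, gamma a₀ u v → gamma a₀ (g u) (g v) := by
    intro u v h
    have := hgauto a₀ u v
    rw [hga₀] at this
    exact this.mpr h
  have hBCA : ∀ x, x ∈ B → x ∈ C → x ∈ A := by
    intro x hxB hxC
    by_contra hxA
    obtain ⟨a, _, hg⟩ := hBC x hxB hxA x hxC hxA
    exact (gamma_ne hg).2.2 rfl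
  set S : Finset (Xt a₀) := toX a₀ (A ∪ B ∪ C) with hS
  set f : Xt a₀ → Xt a₀ :=
    fun x => if x.1 ∈ C \ A then ⟨g x.1, hgne x.1 x.2⟩ else x with hfdef
  have hf : ∀ x ∈ S, ∀ y ∈ S, x < y → f x < f y := by
    intro x hx y hy hxy
    have hxy' : gamma a₀ x.1 y.1 := Xt.lt_iff_gamma.mp hxy
    by_cases hxC : x.1 ∈ C \ A <;> by_cases hyC : y.1 ∈ C \ A <;>
      simp only [hfdef, hxC, hyC, if_pos, if_neg, if_true, if_false]
    · exact Xt.lt_iff_gamma.mpr (hpres _ _ hxy')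
    · -- x ∈ C\A, y not
      by_cases hyA : y.1 ∈ A
      · have : gamma a₀ (g x.1) (g y.1) := hpres _ _ hxy'
        rw [hgfix y.1 hyA] at this
        exact Xt.lt_iff_gamma.mpr this
      · -- y ∈ B \ A
        have hyB : y.1 ∈ B := by
          have := mem_toX.mp hy
          rcases Finset.mem_union.mp this with h1 | h1
          · rcases Finset.mem_union.mp h1 with h2 | h2
            · exact absurd h2 hyA
            · exact h2
          · exact absurd (Finset.mem_sdiff.mpr ⟨h1, hyA⟩) hyC
        obtain ⟨hxC', hxA⟩ := Finset.mem_sdiff.mp hxC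
        have := (ind_pair ha₀ hyA hxA).mp (hBC _ hyB hyA _ hxC' hxA)
        rcases this with h1 | ⟨a, haA, hxa, hay⟩
        · exact absurd h1 (gamma_asymm hxy')
        · have : gamma a₀ (g x.1) a := by
            have := hpres _ _ hxa
            rwa [hgfix a haA] at this
          exact Xt.lt_iff_gamma.mpr (gamma_cut_trans this hay)
    · -- y ∈ C\A, x not
      by_cases hxA : x.1 ∈ A
      · have : gamma a₀ (g x.1) (g y.1) := hpres _ _ hxy'
        rw [hgfix x.1 hxA] at this
        exact Xt.lt_iff_gamma.mpr this
      · have hxB : x.1 ∈ B := by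
          have := mem_toX.mp hx
          rcases Finset.mem_union.mp this with h1 | h1
          · rcases Finset.mem_union.mp h1 with h2 | h2
            · exact absurd h2 hxA
            · exact h2
          · exact absurd (Finset.mem_sdiff.mpr ⟨h1, hxA⟩) hxC
        obtain ⟨hyC', hyA⟩ := Finset.mem_sdiff.mp hyC
        have hgyC' : g y.1 ∈ pimg g C := pimg_mem hyC'
        have hgyA : g y.1 ∉ A := fun hh => hyA (hgA _ hh)
        have := (ind_pair ha₀ hxA hgyA).mp (hBC' _ hxB hxA _ hgyC' hgyA)
        rcases this with h1 | ⟨a, haA, hgya, hax⟩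
        · exact Xt.lt_iff_gamma.mpr h1
        · exfalso
          have hay : gamma a₀ a y.1 := gamma_cut_trans hax hxy'
          have : gamma a₀ (g a) (g y.1) := hpres _ _ hay
          rw [hgfix a haA] at this
          exact gamma_asymm this hgya
    · exact hxy
  obtain ⟨h, hhauto, hha₀, hhS⟩ := main_ext a₀ S f hf
  refine ⟨h, hhauto, ?_, ?_⟩
  · intro q hq
    rcases eq_or_ne q a₀ with rfl | hqne
    · exact hha₀
    · have hqS : (⟨q, hqne⟩ : Xt a₀) ∈ S := by
        apply mem_toX.mpr
        rcases Finset.mem_union.mp hq with h1 | h1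
        · exact Finset.mem_union_left _ (Finset.mem_union_left _ h1)
        · exact Finset.mem_union_left _ (Finset.mem_union_right _ h1)
      have heq := hhS _ hqS
      rw [heq, hfdef]
      have hnot : q ∉ C \ A := by
        intro hh
        obtain ⟨hqC, hqA⟩ := Finset.mem_sdiff.mp hh
        rcases Finset.mem_union.mp hq with h1 | h1
        · exact hqA h1
        · exact hqA (hBCA q h1 hqC)
      simp only [hnot, if_neg, if_false]
  · intro c hc
    rcases eq_or_ne c a₀ with rfl | hcne
    · rw [hha₀, hgfix _ ha₀]
    · have hcS : (⟨c, hcne⟩ : Xt a₀) ∈ S := by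
        apply mem_toX.mpr
        exact Finset.mem_union_right _ hc
      have heq := hhS _ hcS
      rw [heq, hfdef]
      by_cases hcCA : c ∈ C \ A
      · simp only [hcCA, if_pos, if_true]
      · have hcA : c ∈ A := by
          by_contra hh
          exact hcCA (Finset.mem_sdiff.mpr ⟨hc, hh⟩)
        simp only [hcCA, if_neg, if_false]
        exact (hgfix c hcA).symm

lemma swir_inv (A B C : Finset ℚ) (g : Equiv.Perm ℚ) (hg : AutoGamma g)
    (hInd : IndR A B C) : IndR (pimg g A) (pimg g B) (pimg g C) := by
  intro b' hb' hb'A c' hc' hc'A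
  obtain ⟨b, hb, rfl⟩ := mem_pimg.mp hb'
  obtain ⟨c, hc, rfl⟩ := mem_pimg.mp hc'
  have hbA : b ∉ A := fun h => hb'A (pimg_mem h)
  have hcA : c ∉ A := fun h => hc'A (pimg_mem h)
  obtain ⟨a, ha, hgam⟩ := hInd b hb hbA c hc hcA
  exact ⟨g a, pimg_mem ha, (hg c a b).mpr hgam⟩

lemma instEqFix : (fun a b => Classical.propDecidable (a = b) : DecidableEq ℚ) = instDecidableEqRat :=
  Subsingleton.elim _ _

theorem qq_circular_has_localSWIR' :
    ∃ Ind : Finset ℚ → Finset ℚ → Finset ℚ → Prop, IsLocalSWIR AutoGamma Ind := by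
  refine ⟨IndR, ?_, ?_, ?_, ?_, ?_, ?_, ?_⟩
  · intro A B C _ _ _ g hg hInd
    exact swir_inv A B C g hg hInd
  · intro A B C hA _ _
    exact swir_exLeft A B C hA
  · intro A B C hA _ _
    exact swir_exRight A B C hA
  · intro A B B' C hA _ _ _ h1 h2 g hg hfix hp
    subst hp
    rw [instEqFix]
    exact swir_staLeft A B C hA h1 g h2 hg hfix
  · intro A B C C' hA _ _ _ h1 h2 g hg hfix hp
    subst hp
    rw [instEqFix]
    exact swir_staRight A B C hA h1 g h2 hg hfix
  · intro A B C D _ _ _ _ h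
    rw [instEqFix] at h ⊢
    constructor
    · intro b hb hbA c hc hcA
      exact h b (Finset.mem_union_left _ hb) hbA c hc hcA
    · intro d hd hdA c hc hcA
      have hdA' : d ∉ A := fun hh => hdA (Finset.mem_union_left _ hh)
      have hcA' : c ∉ A := fun hh => hcA (Finset.mem_union_left _ hh)
      obtain ⟨a, ha, hg⟩ := h d (Finset.mem_union_right _ hd) hdA' c hc hcA'
      exact ⟨a, Finset.mem_union_left _ ha, hg⟩
  · intro A B C D _ _ _ _ h
    rw [instEqFix] at h ⊢
    constructor
    · intro b hb hbA c hc hcA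
      exact h b hb hbA c (Finset.mem_union_left _ hc) hcA
    · intro b hb hbA d hd hdA
      have hbA' : b ∉ A := fun hh => hbA (Finset.mem_union_left _ hh)
      have hdA' : d ∉ A := fun hh => hdA (Finset.mem_union_left _ hh)
      obtain ⟨a, ha, hg⟩ := h b hb hbA' d (Finset.mem_union_right _ hd) hdA'
      exact ⟨a, Finset.mem_union_left _ ha, hg⟩


theorem qq_circular_has_localSWIR :
    ∃ Ind : Finset ℚ → Finset ℚ → Finset ℚ → Prop, IsLocalSWIR AutoGamma Ind := by
  exact qq_circular_has_localSWIR'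

end Stmt13
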